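/- Let Ω be a nonempty finite type of individuals, ε a type of explanatory signatures, E : Ω → ε the explanatory attributes, P : Ω → Bool the protected attribute, and suppose the predicted outcome D̂ : Ω → Bool factors through the explanatory attributes, i.e. D̂ = g ∘ E for some g : ε → Bool. For each signature v occurring in Ω, let the E-group score be δ applied to the counts f̂ᵢⱼ(v) = |{t ∈ Ω : E t = v, D̂ t = i, P t = j}|, and let the dataset score be the sum over occurring signatures v of (|{t : E t = v}| / |Ω|) times the E-group score. Then the dataset score of the predictions is 0; that is, a classification model that uses only explanatory variables as input is non-discriminatory. In particular, a decision tree whose every internal node splits on an explanatory attribute produces discrimination-free predictions. -/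
import Mathlib


/-- The discrimination score of a count quadruple (f₁₁, f₀₁, f₁₀, f₀₀),
defined to be 0 when a contrast denominator is 0. -/
def delta (f11 f01 f10 f00 : ℚ) : ℚ :=
  if f11 + f01 = 0 ∨ f10 + f00 = 0 then 0
  else f11 / (f11 + f01) - f10 / (f10 + f00)

/-- The number of individuals with explanatory signature `v`, predicted
outcome `i` and protected value `j` (as a rational). -/
def cnt {Ω ε : Type} [Fintype Ω] [DecidableEq ε]
    (E : Ω → ε) (Dhat : Ω → Bool) (P : Ω → Bool) (v : ε) (i j : Bool) : ℚ :=
  ((Finset.univ.filter (fun t => E t = v ∧ Dhat t = i ∧ P t = j)).card : ℚ)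

/-- The number of individuals with explanatory signature `v` (as a rational). -/
def groupSize {Ω ε : Type} [Fintype Ω] [DecidableEq ε] (E : Ω → ε) (v : ε) : ℚ :=
  ((Finset.univ.filter (fun t => E t = v)).card : ℚ)

lemma cnt_comp {Ω ε : Type} [Fintype Ω] [DecidableEq ε]
    (E : Ω → ε) (g : ε → Bool) (P : Ω → Bool) (v : ε) (i j : Bool) :
    cnt E (g ∘ E) P v i j =
      if g v = i then ((Finset.univ.filter (fun t => E t = v ∧ P t = j)).card : ℚ)
      else 0 := by
  unfold cnt
  by_cases h : g v = i
  · simp only [h, if_true]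
    congr 2
    apply Finset.filter_congr
    intro t _
    constructor
    · rintro ⟨hE, _, hP⟩; exact ⟨hE, hP⟩
    · rintro ⟨hE, hP⟩; exact ⟨hE, by simp [Function.comp, hE, h], hP⟩
  · simp only [h, if_false]
    norm_cast
    rw [Finset.card_eq_zero, Finset.filter_eq_empty_iff]
    rintro t _ ⟨hE, hD, _⟩
    exact h (by simpa [Function.comp, hE] using hD)

/-- If the predicted outcome factors through the explanatory
attributes (D̂ = g ∘ E), then the size-weighted average over the occurring
explanatory signatures of the E-group discrimination scores of the predictions
is 0: a model using only explanatory variables is non-discriminatory. -/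
theorem explanatory_model_discrimination_free
    {Ω ε : Type} [Fintype Ω] [Nonempty Ω] [DecidableEq ε]
    (E : Ω → ε) (P : Ω → Bool) (Dhat : Ω → Bool) (g : ε → Bool)
    (hfactor : Dhat = g ∘ E) :
    ∑ v ∈ Finset.univ.image E,
        (groupSize E v / (Fintype.card Ω : ℚ)) *
          delta (cnt E Dhat P v true true) (cnt E Dhat P v false true)
            (cnt E Dhat P v true false) (cnt E Dhat P v false false) = 0 := by
  subst hfactor
  apply Finset.sum_eq_zero
  intro v _
  set a : ℚ := ((Finset.univ.filter (fun t => E t = v ∧ P t = true)).card : ℚ) with ha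
  set b : ℚ := ((Finset.univ.filter (fun t => E t = v ∧ P t = false)).card : ℚ) with hb
  rw [cnt_comp, cnt_comp, cnt_comp, cnt_comp]
  cases hg : g v <;> simp only [hg]
  · -- g v = false : f11 = 0, f10 = 0
    simp only [if_true, if_false, Bool.false_eq_true]
    rw [delta]
    by_cases h : (0 : ℚ) + a = 0 ∨ (0 : ℚ) + b = 0
    · simp [h]
    · push_neg at h
      rw [if_neg (by push_neg; exact h)]
      simp
  · -- g v = true : f01 = 0, f00 = 0
    simp only [if_true, if_false, Bool.true_eq_false]
    rw [delta]
    by_cases h : a + 0 = 0 ∨ b + 0 = 0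
    · rw [if_pos h, mul_zero]
    · push_neg at h
      rw [if_neg (by push_neg; exact h)]
      rw [add_zero, add_zero, div_self (by rw [add_zero] at h; exact h.1),
        div_self (by rw [add_zero, add_zero] at h; exact h.2)]
      simp
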